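/- Let M ≥ 2 be an integer and θ > 1/2. For any positive integer m, tuple (a_1, …, a_m) of positive integers, suppose exactly the entries at positions j_1 < ⋯ < j_k exceed M. Then q_m(a_1, …, a_m) > (∏_{i=1}^{k} a_{j_i}/2) · q_{m−k}(ω), where ω is the tuple obtained from (a_1, …, a_m) by deleting the entries at positions j_1, …, j_k. -/

import Mathlib

def contQ : List ℕ → ℕ
  | [] => 1
  | [a] => a
  | a :: b :: l => a * contQ (b :: l) + contQ l

namespace Stmt19Aux

def qp : List ℕ → ℕ
  | [] => 0
  | _ :: l => contQ l

lemma contQ_cons (a : ℕ) (l : List ℕ) : contQ (a :: l) = a * contQ l + qp l := by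
  cases l <;> simp [contQ, qp]

def fm (a : ℕ) : Matrix (Fin 2) (Fin 2) ℕ := !![a, 1; 1, 0]

def g (l : List ℕ) : Matrix (Fin 2) (Fin 2) ℕ := (l.map fm).prod

lemma g_nil : g [] = 1 := rfl
lemma g_cons (a : ℕ) (l : List ℕ) : g (a :: l) = fm a * g l := by simp [g]
lemma g_append (l₁ l₂ : List ℕ) : g (l₁ ++ l₂) = g l₁ * g l₂ := by simp [g]

lemma contQ_eq (l : List ℕ) : contQ l = g l 0 0 ∧ qp l = g l 1 0 := by
  induction l with
  | nil => constructor <;> simp [g_nil, contQ, qp, Matrix.one_apply]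
  | cons a l ih =>
    rw [g_cons]
    constructor
    · rw [contQ_cons, ih.1, ih.2, Matrix.mul_apply, Fin.sum_univ_two]
      simp [fm]
    · show contQ l = _
      rw [ih.1, Matrix.mul_apply, Fin.sum_univ_two]
      simp [fm]

lemma matFacts : ∀ l : List ℕ, (∀ a ∈ l, 0 < a) →
    1 ≤ g l 0 0 ∧ g l 1 0 ≤ g l 0 0 ∧ g l 0 1 ≤ g l 0 0 ∧
      (l ≠ [] → g l 1 1 ≤ g l 1 0 ∧ g l 1 1 ≤ g l 0 1) := by
  intro l
  induction l with
  | nil => intro _; refine ⟨?_, ?_, ?_, by simp⟩ <;> simp [g_nil, Matrix.one_apply]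
  | cons a l ih =>
    intro h
    have ha : 1 ≤ a := h a List.mem_cons_self
    obtain ⟨h1, h2, h3, h4⟩ := ih (fun b hb => h b (List.mem_cons_of_mem a hb))
    have e00 : g (a :: l) 0 0 = a * g l 0 0 + g l 1 0 := by
      rw [g_cons, Matrix.mul_apply, Fin.sum_univ_two]; simp [fm]
    have e01 : g (a :: l) 0 1 = a * g l 0 1 + g l 1 1 := by
      rw [g_cons, Matrix.mul_apply, Fin.sum_univ_two]; simp [fm]
    have e10 : g (a :: l) 1 0 = g l 0 0 := by
      rw [g_cons, Matrix.mul_apply, Fin.sum_univ_two]; simp [fm]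
    have e11 : g (a :: l) 1 1 = g l 0 1 := by
      rw [g_cons, Matrix.mul_apply, Fin.sum_univ_two]; simp [fm]
    refine ⟨?_, ?_, ?_, fun _ => ⟨?_, ?_⟩⟩
    · rw [e00]; nlinarith
    · rw [e10, e00]; nlinarith
    · rw [e01, e00]
      rcases List.eq_nil_or_concat l with rfl | hne
      · simp [g_nil, Matrix.one_apply]; nlinarith
      · have hlne : l ≠ [] := by rintro rfl; obtain ⟨_, _, h⟩ := hne; simp at h
        obtain ⟨h5, h6⟩ := h4 hlne
        have := Nat.mul_le_mul_left a h3
        omega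
    · rw [e11, e10]; exact h3
    · rw [e11, e01]; nlinarith

lemma contQ_pos {l : List ℕ} (h : ∀ a ∈ l, 0 < a) : 0 < contQ l := by
  rw [(contQ_eq l).1]; exact (matFacts l h).1

lemma del {a : ℕ} (ha : 1 ≤ a) (pre suf : List ℕ) (hpre : ∀ b ∈ pre, 0 < b)
    (hsuf : ∀ b ∈ suf, 0 < b) :
    a * contQ (pre ++ suf) < 2 * contQ (pre ++ a :: suf) := by
  have hL : contQ (pre ++ a :: suf) = g pre 0 0 * (a * g suf 0 0 + g suf 1 0)
      + g pre 0 1 * g suf 0 0 := by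
    rw [(contQ_eq _).1, g_append, g_cons, Matrix.mul_apply, Fin.sum_univ_two,
      Matrix.mul_apply, Fin.sum_univ_two, Matrix.mul_apply, Fin.sum_univ_two]
    simp [fm]
    try ring
  have hR : contQ (pre ++ suf) = g pre 0 0 * g suf 0 0 + g pre 0 1 * g suf 1 0 := by
    rw [(contQ_eq _).1, g_append, Matrix.mul_apply, Fin.sum_univ_two]
  obtain ⟨p1, _, p3, _⟩ := matFacts pre hpre
  obtain ⟨s1, s2, _, _⟩ := matFacts suf hsuf
  rw [hL, hR]
  nlinarith [Nat.mul_le_mul p3 s2, Nat.mul_le_mul p1 s1]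

lemma first_big (P : ℕ → Prop) [DecidablePred P] :
    ∀ l : List ℕ, (∃ a ∈ l, P a) →
      ∃ pre a suf, l = pre ++ a :: suf ∧ P a ∧ ∀ b ∈ pre, ¬ P b := by
  intro l
  induction l with
  | nil => rintro ⟨a, h, _⟩; simp at h
  | cons x t ih =>
    intro hex
    by_cases hx : P x
    · exact ⟨[], x, t, by simp, hx, by simp⟩
    · obtain ⟨a, ha, hPa⟩ := hex
      rcases List.mem_cons.1 ha with rfl | ha
      · exact absurd hPa hx
      · obtain ⟨pre, a, suf, h1, h2, h3⟩ := ih ⟨a, ha, hPa⟩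
        refine ⟨x :: pre, a, suf, by simp [h1], h2, ?_⟩
        intro b hb
        rcases List.mem_cons.1 hb with rfl | hb
        · exact hx
        · exact h3 b hb

lemma natMain (M : ℕ) : ∀ n : ℕ, ∀ l : List ℕ, (∀ a ∈ l, 0 < a) →
    (l.filter (fun a => decide (M < a))).length = n →
    (l.filter (fun a => decide (M < a))).prod *
        contQ (l.filter (fun a => decide (a ≤ M))) ≤ 2 ^ n * contQ l ∧
    (0 < n → (l.filter (fun a => decide (M < a))).prod *
        contQ (l.filter (fun a => decide (a ≤ M))) < 2 ^ n * contQ l) := by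
  intro n
  induction n with
  | zero =>
    intro l hpos hlen
    have hnil : l.filter (fun a => decide (M < a)) = [] := List.length_eq_zero_iff.1 hlen
    have hall : ∀ a ∈ l, ¬ M < a := by
      intro a ha hMa
      have : a ∈ l.filter (fun a => decide (M < a)) := by
        rw [List.mem_filter]; exact ⟨ha, by simpa using hMa⟩
      simp [hnil] at this
    have hsmall : l.filter (fun a => decide (a ≤ M)) = l := by
      apply List.filter_eq_self.2
      intro a ha; simpa using Nat.le_of_not_lt (hall a ha)
    rw [hnil, hsmall]
    simp
  | succ n ih =>
    intro l hpos hlen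
    have hex : ∃ a ∈ l, M < a := by
      have : l.filter (fun a => decide (M < a)) ≠ [] := by
        intro h; rw [h] at hlen; simp at hlen
      obtain ⟨a, ha⟩ := List.exists_mem_of_ne_nil _ this
      rw [List.mem_filter] at ha
      exact ⟨a, ha.1, by simpa using ha.2⟩
    obtain ⟨pre, a, suf, rfl, hMa, hpre⟩ := first_big (fun a => M < a) l hex
    have hpre' : ∀ b ∈ pre, 0 < b := fun b hb => hpos b (by simp [hb])
    have hsuf' : ∀ b ∈ suf, 0 < b := fun b hb => hpos b (by simp [hb])
    have ha1 : 1 ≤ a := le_trans (by omega) hMa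
    have hfpre : pre.filter (fun a => decide (M < a)) = [] := by
      apply List.filter_eq_nil_iff.2
      intro b hb; simpa using hpre b hb
    have hfpre2 : pre.filter (fun a => decide (a ≤ M)) = pre := by
      apply List.filter_eq_self.2
      intro b hb; simpa using Nat.le_of_not_lt (hpre b hb)
    have hbig : (pre ++ a :: suf).filter (fun a => decide (M < a)) =
        a :: (pre ++ suf).filter (fun a => decide (M < a)) := by
      simp [List.filter_append, hfpre, hMa]
    have hsmall : (pre ++ a :: suf).filter (fun a => decide (a ≤ M)) =
        (pre ++ suf).filter (fun a => decide (a ≤ M)) := by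
      simp [List.filter_append, hfpre2, Nat.not_le.2 hMa]
    have hlen' : ((pre ++ suf).filter (fun a => decide (M < a))).length = n := by
      rw [hbig] at hlen
      simpa [List.filter_append, hfpre] using hlen
    have hpos' : ∀ b ∈ pre ++ suf, 0 < b := by
      intro b hb; rcases List.mem_append.1 hb with h | h
      · exact hpre' b h
      · exact hsuf' b h
    obtain ⟨hle, _⟩ := ih (pre ++ suf) hpos' hlen'
    have hdel := del ha1 pre suf hpre' hsuf'
    rw [hbig, hsmall]
    have key : (a :: (pre ++ suf).filter (fun a => decide (M < a))).prod
        = a * ((pre ++ suf).filter (fun a => decide (M < a))).prod := List.prod_cons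
    rw [key]
    have step : a * ((pre ++ suf).filter (fun a => decide (M < a))).prod *
        contQ ((pre ++ suf).filter (fun a => decide (a ≤ M)))
        ≤ a * (2 ^ n * contQ (pre ++ suf)) := by
      rw [mul_assoc]
      exact Nat.mul_le_mul_left a hle
    have step2 : a * (2 ^ n * contQ (pre ++ suf)) < 2 ^ (n + 1) * contQ (pre ++ a :: suf) := by
      have : 2 ^ (n+1) * contQ (pre ++ a :: suf) = 2 ^ n * (2 * contQ (pre ++ a :: suf)) := by
        ring
      rw [this]
      calc a * (2 ^ n * contQ (pre ++ suf)) = 2 ^ n * (a * contQ (pre ++ suf)) := by ring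
        _ < 2 ^ n * (2 * contQ (pre ++ a :: suf)) :=
          mul_lt_mul_of_pos_left hdel (Nat.pow_pos (by norm_num))
    exact ⟨le_of_lt (lt_of_le_of_lt step step2), fun _ => lt_of_le_of_lt step step2⟩

end Stmt19Aux

lemma map_half_prod (l : List ℕ) :
    (l.map (fun a => (a : ℝ) / 2)).prod = (l.prod : ℝ) / 2 ^ l.length := by
  simp only [bind_pure_comp, List.map_eq_map, List.map_map]
  induction l with
  | nil => simp
  | cons a t ih =>
    rw [List.map_cons, List.prod_cons, ih, List.prod_cons, Nat.cast_mul,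
      List.length_cons, pow_succ]
    simp only [Function.comp_apply]
    ring

theorem stmt19 (M : ℕ) (hM : 2 ≤ M) (θ : ℝ) (hθ : 1 / 2 < θ)
    (l : List ℕ) (hl : l ≠ []) (hpos : ∀ a ∈ l, 0 < a)
    (hex : ∃ a ∈ l, M < a) :
    ((l.filter (fun a => decide (M < a))).map (fun a => (a : ℝ) / 2)).prod *
        (contQ (l.filter (fun a => decide (a ≤ M))) : ℝ)
      < (contQ l : ℝ) := by
  have hlen0 : 0 < (l.filter (fun a => decide (M < a))).length := by
    obtain ⟨a, ha, hMa⟩ := hex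
    have : a ∈ l.filter (fun a => decide (M < a)) :=
      List.mem_filter.2 ⟨ha, by simpa using hMa⟩
    exact List.length_pos_iff.2 (List.ne_nil_of_mem this)
  have h := (Stmt19Aux.natMain M (l.filter (fun a => decide (M < a))).length l hpos rfl).2 hlen0
  have hcast : ((l.filter (fun a => decide (M < a))).prod : ℝ) *
      (contQ (l.filter (fun a => decide (a ≤ M))) : ℝ)
      < 2 ^ (l.filter (fun a => decide (M < a))).length * (contQ l : ℝ) := by
    exact_mod_cast h
  rw [map_half_prod, div_mul_eq_mul_div, div_lt_iff₀ (by positivity)]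
  calc ((l.filter (fun a => decide (M < a))).prod : ℝ) *
      (contQ (l.filter (fun a => decide (a ≤ M))) : ℝ)
      < 2 ^ (l.filter (fun a => decide (M < a))).length * (contQ l : ℝ) := hcast
    _ = (contQ l : ℝ) * 2 ^ (l.filter (fun a => decide (M < a))).length := mul_comm _ _
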